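/- Let x : [0,1] → ℝ be continuous such that for every 0 ≤ c < d ≤ 1 there exist partitions (π̂_n) of [c,d] with ⟨x⟩^{π̂_n}_{(c,d]} → ∞. Let a : [0,1] → [0,∞) be any increasing function with a(0) = 0. Then there exist refining partitions (π_n) of [0,1], each containing the dyadics of order n, such that ⟨x⟩^{π_n}_t → a(t) for all t ∈ [0,1]; the convergence is uniform if a is continuous. -/

import Mathlib

open Filter Set

/-- A finite partition of `[c,d]`. -/
def IsPartitionOf (π : ℕ → ℝ) (c d : ℝ) : Prop :=
  π 0 = c ∧ Monotone π ∧ ∃ N, ∀ k ≥ N, π k = d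

/-- A finite partition of `[0,1]`. -/
def IsPartition01 (π : ℕ → ℝ) : Prop := IsPartitionOf π 0 1

/-- The quadratic variation of `x` along a finite partition `π`. -/
noncomputable def qvFull (x : ℝ → ℝ) (π : ℕ → ℝ) : ℝ :=
  ∑' i : ℕ, (x (π (i + 1)) - x (π i)) ^ 2

/-- The stopped discrete quadratic variation `⟨x⟩^π_t`. -/
noncomputable def qvAt (x : ℝ → ℝ) (π : ℕ → ℝ) (t : ℝ) : ℝ :=
  ∑' j : ℕ, (x (min (π (j + 1)) t) - x (min (π j) t)) ^ 2

namespace QVTool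






/-- quadratic variation of `x` along a list of points -/
noncomputable def lqv (x : ℝ → ℝ) : List ℝ → ℝ
  | [] => 0
  | [_] => 0
  | u :: w :: r => (x w - x u) ^ 2 + lqv x (w :: r)

lemma lqv_nil (x : ℝ → ℝ) : lqv x [] = 0 := rfl
lemma lqv_single (x : ℝ → ℝ) (u : ℝ) : lqv x [u] = 0 := rfl
lemma lqv_cons (x : ℝ → ℝ) (u w : ℝ) (r : List ℝ) :
    lqv x (u :: w :: r) = (x w - x u) ^ 2 + lqv x (w :: r) := rfl

lemma lqv_nonneg (x : ℝ → ℝ) : ∀ l : List ℝ, 0 ≤ lqv x l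
  | [] => le_refl _
  | [_] => le_refl _
  | u :: w :: r => by
      rw [lqv_cons]
      have := lqv_nonneg x (w :: r)
      positivity

lemma lqv_append (x : ℝ → ℝ) : ∀ (l₁ l₂ : List ℝ), l₁ ≠ [] → l₂ ≠ [] →
    lqv x (l₁ ++ l₂) = lqv x l₁ + (x (l₂.headD 0) - x (l₁.getLastD 0)) ^ 2 + lqv x l₂
  | [], _, h, _ => absurd rfl h
  | [u], l₂, _, h₂ => by
      cases l₂ with
      | nil => exact absurd rfl h₂
      | cons b r => simp [lqv_cons, lqv_single]
  | u :: w :: r, l₂, _, h₂ => by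
      have ih := lqv_append x (w :: r) l₂ (by simp) h₂
      simp only [List.cons_append, lqv_cons] at *
      rw [ih]
      simp [List.getLastD_cons]
      ring

lemma lqv_of_const (x : ℝ → ℝ) (c : ℝ) : ∀ (l : List ℝ), (∀ y ∈ l, y = c) → lqv x l = 0
  | [], _ => rfl
  | [_], _ => rfl
  | u :: w :: r, h => by
      rw [lqv_cons, lqv_of_const x c (w :: r) (fun y hy => h y (List.mem_cons_of_mem _ hy)),
        h u (by simp), h w (by simp)]
      ring

lemma lqv_sum (x : ℝ → ℝ) : ∀ (l : List ℝ),
    lqv x l = ∑ j ∈ Finset.range (l.length - 1),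
      (x (l.getD (j + 1) 0) - x (l.getD j 0)) ^ 2
  | [] => by simp [lqv_nil]
  | [u] => by simp [lqv_single]
  | u :: w :: r => by
      rw [lqv_cons, lqv_sum x (w :: r)]
      have hlen : (u :: w :: r).length - 1 = ((w :: r).length - 1) + 1 := by
        simp
      rw [hlen, Finset.sum_range_succ']
      simp [List.getD_cons_succ, List.getD_cons_zero]
      ring

/-- bound for lqv when consecutive squared increments are bounded -/
lemma lqv_le_of_chain (x : ℝ → ℝ) (m : ℝ) (hm : 0 ≤ m) :
    ∀ (l : List ℝ), List.IsChain (fun a b => (x b - x a) ^ 2 ≤ m) l →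
      lqv x l ≤ l.length * m
  | [] , _ => by simp [lqv_nil]
  | [u], _ => by simp [lqv_single, hm]
  | u :: w :: r, h => by
      rw [lqv_cons]
      rcases List.isChain_cons_cons.1 h with ⟨h1, h2⟩
      have ih := lqv_le_of_chain x m hm (w :: r) h2
      have : ((u :: w :: r).length : ℝ) * m = m + ((w :: r).length : ℝ) * m := by
        simp [List.length_cons]; ring
      rw [this]
      linarith







/-- a list is a partition of `[c,d]` -/
def PartL (l : List ℝ) (c d : ℝ) : Prop :=
  l.head? = some c ∧ l.getLast? = some d ∧ List.IsChain (· ≤ ·) l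

lemma PartL.ne_nil {l : List ℝ} {c d : ℝ} (h : PartL l c d) : l ≠ [] := by
  intro hl; rw [hl] at h; simp [PartL] at h

lemma sorted_getElem_le {l : List ℝ} (h : List.IsChain (· ≤ ·) l) {i j : ℕ}
    (hij : i ≤ j) (hj : j < l.length) : l[i]'(lt_of_le_of_lt hij hj) ≤ l[j] := by
  rcases eq_or_lt_of_le hij with rfl | hlt
  · exact le_refl _
  · exact (List.pairwise_iff_getElem.1 (List.isChain_iff_pairwise.1 h)) i j _ hj hlt

lemma head_le_mem {l : List ℝ} {c : ℝ} (hh : l.head? = some c)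
    (h : List.IsChain (· ≤ ·) l) {y : ℝ} (hy : y ∈ l) : c ≤ y := by
  cases l with
  | nil => simp at hy
  | cons u r =>
    simp at hh; subst hh
    have hp := List.pairwise_cons.1 (List.isChain_iff_pairwise.1 h)
    rcases List.mem_cons.1 hy with rfl | hy
    · exact le_refl _
    · exact hp.1 y hy

lemma mem_le_getLast {l : List ℝ} {d : ℝ} (hh : l.getLast? = some d)
    (h : List.IsChain (· ≤ ·) l) {y : ℝ} (hy : y ∈ l) : y ≤ d := by
  have hne : l ≠ [] := by rintro rfl; simp at hh
  obtain ⟨i, hi, rfl⟩ := List.mem_iff_getElem.1 hy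
  rw [List.getLast?_eq_getLast hne, Option.some_inj, List.getLast_eq_getElem] at hh
  rw [← hh]
  exact sorted_getElem_le h (by omega) (by omega)

lemma getLast?_mem' {l : List ℝ} {d : ℝ} (hh : l.getLast? = some d) : d ∈ l := by
  cases l with
  | nil => simp at hh
  | cons u r =>
    have := List.getLast?_eq_getLast (l := u :: r) (by simp)
    rw [this] at hh
    simp at hh
    rw [← hh]
    exact List.getLast_mem _

lemma head?_mem' {l : List ℝ} {c : ℝ} (hh : l.head? = some c) : c ∈ l := by
  cases l with
  | nil => simp at hh
  | cons u r => simp at hh; simp [hh]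

lemma PartL.mem_Icc {l : List ℝ} {c d : ℝ} (h : PartL l c d) {y : ℝ} (hy : y ∈ l) :
    c ≤ y ∧ y ≤ d :=
  ⟨head_le_mem h.1 h.2.2 hy, mem_le_getLast h.2.1 h.2.2 hy⟩

lemma map_min_eq_self {l : List ℝ} {t : ℝ} (h : ∀ y ∈ l, y ≤ t) :
    l.map (fun y => min y t) = l := by
  conv_rhs => rw [← List.map_id l]
  exact List.map_congr_left (fun y hy => min_eq_left (h y hy))





lemma no_strict_between {l : List ℝ} (h : List.IsChain (· ≤ ·) l) {p : ℝ}
    (hp : p ∈ l) {j : ℕ} (hj : j + 1 < l.length)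
    (h1 : l[j] < p) (h2 : p < l[j+1]) : False := by
  obtain ⟨i, hi, rfl⟩ := List.mem_iff_getElem.1 hp
  rcases le_or_gt i j with hij | hij
  · exact absurd (sorted_getElem_le h hij (by omega)) (not_le.2 h1)
  · exact absurd (sorted_getElem_le h (show j + 1 ≤ i by omega) hi) (not_le.2 h2)

lemma getD_map_min (l : List ℝ) (t : ℝ) {j : ℕ} (hj : j < l.length) :
    (l.map (fun y => min y t)).getD j 0 = min (l.getD j 0) t := by
  rw [List.getD_eq_getElem _ _ (by simpa using hj), List.getD_eq_getElem _ _ hj,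
    List.getElem_map]

/-- the stopped quadratic variation along a sorted list, as a sum -/
lemma lqv_stop_sum (x : ℝ → ℝ) (l : List ℝ) (t : ℝ) :
    lqv x (l.map (fun y => min y t)) = ∑ j ∈ Finset.range (l.length - 1),
      (x (min (l.getD (j + 1) 0) t) - x (min (l.getD j 0) t)) ^ 2 := by
  rw [lqv_sum]
  rw [List.length_map]
  refine Finset.sum_congr rfl (fun j hj => ?_)
  have hj' := Finset.mem_range.1 hj
  rw [getD_map_min _ _ (by omega), getD_map_min _ _ (by omega)]

/-- Claim A : stopping later at a partition point gives a larger value -/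
lemma lqv_stop_mono (x : ℝ → ℝ) {l : List ℝ} (h : List.IsChain (· ≤ ·) l)
    {p t : ℝ} (hp : p ∈ l) (hpt : p ≤ t) :
    lqv x (l.map (fun y => min y p)) ≤ lqv x (l.map (fun y => min y t)) := by
  classical
  rw [lqv_stop_sum, lqv_stop_sum]
  set n := l.length with hn
  set S := (Finset.range (n - 1)).filter (fun j => l.getD (j+1) 0 ≤ p) with hS
  have hsub : S ⊆ Finset.range (n - 1) := Finset.filter_subset _ _
  have h1 : ∑ j ∈ Finset.range (n-1), (x (min (l.getD (j + 1) 0) p) - x (min (l.getD j 0) p)) ^ 2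
      = ∑ j ∈ S, (x (min (l.getD (j + 1) 0) p) - x (min (l.getD j 0) p)) ^ 2 := by
    refine (Finset.sum_subset hsub (fun j hj hjs => ?_)).symm
    have hj' := Finset.mem_range.1 hj
    have hgt : ¬ (l.getD (j+1) 0 ≤ p) := by
      intro hc; exact hjs (Finset.mem_filter.2 ⟨hj, hc⟩)
    push_neg at hgt
    have hjlt : j + 1 < n := by omega
    have hle : p ≤ l.getD j 0 := by
      by_contra hcon
      push_neg at hcon
      rw [List.getD_eq_getElem _ _ (by omega)] at hcon
      rw [List.getD_eq_getElem _ _ (by omega)] at hgt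
      exact no_strict_between h hp hjlt hcon hgt
    rw [min_eq_right hgt.le, min_eq_right hle]
    ring
  rw [h1]
  have h2 : ∀ j ∈ S, (x (min (l.getD (j + 1) 0) p) - x (min (l.getD j 0) p)) ^ 2
      = (x (min (l.getD (j + 1) 0) t) - x (min (l.getD j 0) t)) ^ 2 := by
    intro j hj
    rcases Finset.mem_filter.1 hj with ⟨hj1, hj2⟩
    have hj' := Finset.mem_range.1 hj1
    have hle : l.getD j 0 ≤ l.getD (j+1) 0 := by
      rw [List.getD_eq_getElem _ _ (by omega), List.getD_eq_getElem _ _ (by omega)]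
      exact sorted_getElem_le h (by omega) (by omega)
    rw [min_eq_left hj2, min_eq_left (le_trans hj2 hpt),
      min_eq_left (le_trans hle hj2), min_eq_left (le_trans hle (le_trans hj2 hpt))]
  rw [Finset.sum_congr rfl h2]
  exact Finset.sum_le_sum_of_subset_of_nonneg hsub (fun j _ _ => sq_nonneg _)

/-- Claim B : stopping at `t ≤ q` exceeds stopping at partition point `q` by at most
the oscillation term -/
lemma lqv_stop_le (x : ℝ → ℝ) {l : List ℝ} (h : List.IsChain (· ≤ ·) l)
    {p q t η : ℝ} (hp : p ∈ l) (hq : q ∈ l) (hpt : p ≤ t) (htq : t ≤ q)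
    (hη : 0 ≤ η) (hosc : ∀ u, p ≤ u → u ≤ t → (x t - x u) ^ 2 ≤ η) :
    lqv x (l.map (fun y => min y t)) ≤ lqv x (l.map (fun y => min y q)) + η := by
  classical
  rw [lqv_stop_sum, lqv_stop_sum]
  set n := l.length with hn
  set C := fun j => (x (min (l.getD (j + 1) 0) t) - x (min (l.getD j 0) t)) ^ 2 with hC
  set D := fun j => (x (min (l.getD (j + 1) 0) q) - x (min (l.getD j 0) q)) ^ 2 with hD
  set S := (Finset.range (n - 1)).filter (fun j => l.getD (j+1) 0 ≤ t) with hS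
  set T := (Finset.range (n - 1)).filter
      (fun j => ¬ (l.getD (j+1) 0 ≤ t) ∧ l.getD j 0 < t) with hT
  have hST : S ∪ T ⊆ Finset.range (n - 1) :=
    Finset.union_subset (Finset.filter_subset _ _) (Finset.filter_subset _ _)
  have hzero : ∀ j ∈ Finset.range (n-1), j ∉ S ∪ T → C j = 0 := by
    intro j hj hjn
    have h1 : ¬ (l.getD (j+1) 0 ≤ t) := fun hc =>
      hjn (Finset.mem_union_left _ (Finset.mem_filter.2 ⟨hj, hc⟩))
    have h2 : ¬ (l.getD j 0 < t) := fun hc =>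
      hjn (Finset.mem_union_right _ (Finset.mem_filter.2 ⟨hj, ⟨h1, hc⟩⟩))
    push_neg at h1 h2
    simp only [hC, min_eq_right h1.le, min_eq_right h2]
    ring
  have hsum1 : ∑ j ∈ Finset.range (n-1), C j = ∑ j ∈ S, C j + ∑ j ∈ T, C j := by
    have hdisj : Disjoint S T := by
      rw [Finset.disjoint_filter]; tauto
    rw [← Finset.sum_union hdisj]
    exact (Finset.sum_subset hST hzero).symm
  have hcongr : ∑ j ∈ S, C j = ∑ j ∈ S, D j := by
    refine Finset.sum_congr rfl (fun j hj => ?_)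
    rcases Finset.mem_filter.1 hj with ⟨hj1, hj2⟩
    have hj' := Finset.mem_range.1 hj1
    have hle : l.getD j 0 ≤ l.getD (j+1) 0 := by
      rw [List.getD_eq_getElem _ _ (by omega), List.getD_eq_getElem _ _ (by omega)]
      exact sorted_getElem_le h (by omega) (by omega)
    simp only [hC, hD, min_eq_left hj2, min_eq_left (le_trans hj2 htq),
      min_eq_left (le_trans hle hj2), min_eq_left (le_trans hle (le_trans hj2 htq))]
  have hTbound : ∑ j ∈ T, C j ≤ η := by
    have hcard : ∀ j1 ∈ T, ∀ j2 ∈ T, j1 = j2 := by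
      intro j1 hj1 j2 hj2
      rcases Finset.mem_filter.1 hj1 with ⟨hr1, hc1, hd1⟩
      rcases Finset.mem_filter.1 hj2 with ⟨hr2, hc2, hd2⟩
      push_neg at hc1 hc2
      by_contra hne
      have hr1' := Finset.mem_range.1 hr1
      have hr2' := Finset.mem_range.1 hr2
      rcases Nat.lt_or_ge j1 j2 with hlt | hge
      · have : l.getD (j1+1) 0 ≤ l.getD j2 0 := by
          rw [List.getD_eq_getElem _ _ (by omega), List.getD_eq_getElem _ _ (by omega)]
          exact sorted_getElem_le h (by omega) (by omega)
        linarith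
      · have hlt2 : j2 < j1 := by omega
        have : l.getD (j2+1) 0 ≤ l.getD j1 0 := by
          rw [List.getD_eq_getElem _ _ (by omega), List.getD_eq_getElem _ _ (by omega)]
          exact sorted_getElem_le h (by omega) (by omega)
        linarith
    rcases T.eq_empty_or_nonempty with hTe | ⟨j0, hj0⟩
    · rw [hTe]; simpa using hη
    · have hTsing : T = {j0} := Finset.eq_singleton_iff_unique_mem.2
        ⟨hj0, fun y hy => hcard y hy j0 hj0⟩
      rw [hTsing, Finset.sum_singleton]
      rcases Finset.mem_filter.1 hj0 with ⟨hr0, hc0, hd0⟩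
      push_neg at hc0
      have hj0' := Finset.mem_range.1 hr0
      have hplb : p ≤ l.getD j0 0 := by
        by_contra hcon
        push_neg at hcon
        have hns := no_strict_between h hp (show j0 + 1 < n by omega)
        rw [List.getD_eq_getElem _ _ (by omega)] at hcon
        rw [List.getD_eq_getElem _ _ (by omega)] at hc0
        exact hns hcon (lt_of_le_of_lt hpt hc0)
      simp only [hC, min_eq_right hc0.le, min_eq_left hd0.le]
      exact hosc _ hplb hd0.le
  calc ∑ j ∈ Finset.range (n-1), C j = ∑ j ∈ S, C j + ∑ j ∈ T, C j := hsum1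
    _ ≤ ∑ j ∈ S, D j + η := add_le_add (le_of_eq hcongr) hTbound
    _ ≤ ∑ j ∈ Finset.range (n-1), D j + η :=
        add_le_add (Finset.sum_le_sum_of_subset_of_nonneg (Finset.filter_subset _ _)
          (fun j _ _ => by simp only [hD]; positivity)) (le_refl _)











noncomputable def seqOf (l : List ℝ) : ℕ → ℝ := fun i => l.getD i 1

lemma seqOf_eq_getElem {l : List ℝ} {i : ℕ} (hi : i < l.length) :
    seqOf l i = l[i] := List.getD_eq_getElem l 1 hi

lemma seqOf_eq_one {l : List ℝ} (h : l.getLast? = some 1) {i : ℕ}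
    (hi : l.length - 1 ≤ i) : seqOf l i = 1 := by
  have hne : l ≠ [] := by rintro rfl; simp at h
  rcases lt_or_ge i l.length with hlt | hge
  · have hieq : i = l.length - 1 := by
      have := List.length_pos_iff.2 hne; omega
    subst hieq
    rw [seqOf_eq_getElem hlt]
    rw [List.getLast?_eq_getLast hne, Option.some_inj, List.getLast_eq_getElem] at h
    exact h
  · exact List.getD_eq_default _ _ hge

lemma seqOf_isPartition01 {l : List ℝ} (h : PartL l 0 1) : IsPartition01 (seqOf l) := by
  obtain ⟨h1, h2, h3⟩ := h
  have hne : l ≠ [] := by rintro rfl; simp at h1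
  have hlen := List.length_pos_iff.2 hne
  refine ⟨?_, ?_, l.length, fun k hk => seqOf_eq_one h2 (by omega)⟩
  · rw [seqOf_eq_getElem hlen]
    cases l with
    | nil => simp at h1
    | cons u r => simp at h1 ⊢; exact h1
  · intro i j hij
    rcases lt_or_ge j l.length with hj | hj
    · rw [seqOf_eq_getElem hj, seqOf_eq_getElem (lt_of_le_of_lt hij hj)]
      exact sorted_getElem_le h3 hij hj
    · rw [seqOf_eq_one h2 (i := j) (by omega)]
      rcases lt_or_ge i l.length with hi | hi
      · rw [seqOf_eq_getElem hi]
        exact mem_le_getLast h2 h3 (List.getElem_mem _)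
      · rw [seqOf_eq_one h2 (i := i) (by omega)]

lemma range_seqOf {l : List ℝ} (h : PartL l 0 1) :
    Set.range (seqOf l) = {y | y ∈ l} := by
  ext y
  constructor
  · rintro ⟨i, rfl⟩
    rcases lt_or_ge i l.length with hi | hi
    · rw [seqOf_eq_getElem hi]; exact List.getElem_mem _
    · rw [seqOf_eq_one h.2.1 (by omega)]
      exact getLast?_mem' h.2.1
  · intro hy
    obtain ⟨i, hi, rfl⟩ := List.mem_iff_getElem.1 hy
    exact ⟨i, seqOf_eq_getElem hi⟩

lemma qvAt_eq_lqv (x : ℝ → ℝ) {l : List ℝ} (h : PartL l 0 1) (t : ℝ) :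
    qvAt x (seqOf l) t = lqv x (l.map (fun y => min y t)) := by
  have hne : l ≠ [] := by have := h.1; rintro rfl; simp at this
  have hlen := List.length_pos_iff.2 hne
  rw [qvAt, lqv_sum]
  rw [List.length_map]
  have hzero : ∀ j ∉ Finset.range (l.length - 1),
      (x (min (seqOf l (j + 1)) t) - x (min (seqOf l j) t)) ^ 2 = 0 := by
    intro j hj
    rw [Finset.mem_range] at hj
    push_neg at hj
    rw [seqOf_eq_one h.2.1 (by omega), seqOf_eq_one h.2.1 (by omega)]
    ring
  rw [tsum_eq_sum hzero]
  refine Finset.sum_congr rfl (fun j hj => ?_)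
  have hj' := Finset.mem_range.1 hj
  rw [getD_map_min _ _ (by omega), getD_map_min _ _ (by omega),
    seqOf_eq_getElem (show j < l.length by omega),
    seqOf_eq_getElem (show j + 1 < l.length by omega),
    List.getD_eq_getElem _ _ (show j < l.length by omega),
    List.getD_eq_getElem _ _ (show j + 1 < l.length by omega)]

lemma lqv_eq_qvFull (x : ℝ → ℝ) (p : ℕ → ℝ) (N : ℕ) (hN : ∀ k ≥ N, p k = p N) :
    lqv x ((List.range (N + 1)).map p) = qvFull x p := by
  rw [lqv_sum, qvFull]
  have hlen : ((List.range (N + 1)).map p).length = N + 1 := by simp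
  rw [hlen]
  have hzero : ∀ j ∉ Finset.range N, (x (p (j + 1)) - x (p j)) ^ 2 = 0 := by
    intro j hj
    rw [Finset.mem_range] at hj
    push_neg at hj
    rw [hN (j+1) (by omega), hN j (by omega)]
    ring
  rw [tsum_eq_sum hzero]
  refine (Finset.sum_congr (by rw [Nat.add_sub_cancel]) (fun j hj => ?_)).symm
  have hj' := Finset.mem_range.1 hj
  have e1 : ((List.range (N + 1)).map p).getD j 0 = p j := by
    rw [List.getD_eq_getElem _ _ (by simp; omega)]
    simp
  have e2 : ((List.range (N + 1)).map p).getD (j+1) 0 = p (j+1) := by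
    rw [List.getD_eq_getElem _ _ (by simp; omega)]
    simp
  rw [e1, e2]





lemma mem_uIcc_of_convex {A B θ : ℝ} (h0 : 0 ≤ θ) (h1 : θ ≤ 1) :
    A + θ * (B - A) ∈ Set.uIcc A B := by
  rcases le_total A B with hab | hab
  · rw [Set.uIcc_of_le hab, Set.mem_Icc]
    constructor <;> nlinarith
  · rw [Set.uIcc_of_ge hab, Set.mem_Icc]
    constructor <;> nlinarith

lemma exists_small_part (x : ℝ → ℝ) (hx : ContinuousOn x (Set.Icc 0 1))
    (u w : ℝ) (hu : 0 ≤ u) (huw : u ≤ w) (hw : w ≤ 1) (δ : ℝ) (hδ : 0 < δ) :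
    ∃ S, PartL S u w ∧ lqv x S ≤ δ := by
  classical
  set Δ := x w - x u with hΔ
  obtain ⟨N₀, hN₀⟩ := exists_nat_ge (4 * Δ ^ 2 / δ)
  set N := N₀ + 1 with hN
  have hN1 : 1 ≤ N := by omega
  have hNpos : (0 : ℝ) < N := by positivity
  have hNge : 4 * Δ ^ 2 / δ ≤ (N : ℝ) := by
    rw [hN]; push_cast; linarith
  set ℓ : ℕ → ℝ := fun i => x u + ((i : ℝ) / N) * Δ with hℓ
  have hxc : ContinuousOn x (Set.Icc u w) :=
    hx.mono (Set.Icc_subset_Icc hu hw)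
  set S : ℕ → Set ℝ := fun i => Set.Icc u w ∩ x ⁻¹' {ℓ i} with hSdef
  have hScompact : ∀ i, IsCompact (S i) := fun i =>
    IsCompact.of_isClosed_subset isCompact_Icc
      (hxc.preimage_isClosed_of_isClosed isClosed_Icc isClosed_singleton)
      Set.inter_subset_left
  have hℓN : ℓ N = x w := by
    rw [hℓ]; field_simp; rw [hΔ]; ring
  have hℓmem : ∀ i, i ≤ N → ℓ i ∈ Set.uIcc (x u) (x w) := by
    intro i hi
    have : ℓ i = x u + ((i : ℝ) / N) * (x w - x u) := rfl
    rw [this]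
    exact mem_uIcc_of_convex (by positivity)
      (by rw [div_le_one hNpos]; exact_mod_cast hi)
  have hSne : ∀ i, i ≤ N → (S i).Nonempty := by
    intro i hi
    have h1 : Set.uIcc u w = Set.Icc u w := Set.uIcc_of_le huw
    have := intermediate_value_uIcc (by rw [h1]; exact hxc)
    have h2 := this (hℓmem i hi)
    rw [h1] at h2
    obtain ⟨r, hr1, hr2⟩ := h2
    exact ⟨r, hr1, by simpa using hr2⟩
  set t : ℕ → ℝ := fun i => sSup (S i) with ht
  have htmem : ∀ i, i ≤ N → t i ∈ S i := fun i hi =>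
    (hScompact i).sSup_mem (hSne i hi)
  have htIcc : ∀ i, i ≤ N → u ≤ t i ∧ t i ≤ w := fun i hi =>
    ⟨(htmem i hi).1.1, (htmem i hi).1.2⟩
  have htx : ∀ i, i ≤ N → x (t i) = ℓ i := fun i hi => by
    have := (htmem i hi).2; simpa using this
  have htmono : ∀ i, i + 1 ≤ N → t i ≤ t (i + 1) := by
    intro i hi
    by_contra hcon
    push_neg at hcon
    have hiN : (i : ℝ) < N := by exact_mod_cast hi
    have hℓ1 : ℓ (i + 1) ∈ Set.uIcc (ℓ i) (ℓ N) := by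
      have hne : (N : ℝ) - i ≠ 0 := by intro h0; linarith
      have : ℓ (i + 1) = ℓ i + (1 / ((N : ℝ) - i)) * (ℓ N - ℓ i) := by
        rw [hℓ]; field_simp; push_cast; ring
      rw [this]
      have hi1 : ((i : ℝ) + 1) ≤ N := by exact_mod_cast hi
      refine mem_uIcc_of_convex (le_of_lt (one_div_pos.2 (by linarith))) ?_
      rw [div_le_one (by linarith)]
      linarith
    have hIcc : Set.uIcc (t i) w = Set.Icc (t i) w := Set.uIcc_of_le (htIcc i (by omega)).2
    have hsub : Set.Icc (t i) w ⊆ Set.Icc u w :=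
      Set.Icc_subset_Icc (htIcc i (by omega)).1 (le_refl _)
    have hivt := intermediate_value_uIcc (f := x) (a := t i) (b := w)
      (by rw [hIcc]; exact hxc.mono hsub)
    rw [htx i (by omega)] at hivt
    have : ℓ (i + 1) ∈ Set.uIcc (ℓ i) (x w) := by rw [← hℓN]; exact hℓ1
    obtain ⟨r, hr1, hr2⟩ := hivt this
    rw [hIcc] at hr1
    have hrS : r ∈ S (i + 1) := ⟨⟨le_trans (htIcc i (by omega)).1 hr1.1, hr1.2⟩, by simpa using hr2⟩
    have hbdd : BddAbove (S (i + 1)) := (hScompact (i + 1)).bddAbove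
    have : r ≤ t (i + 1) := le_csSup hbdd hrS
    linarith [hr1.1]
  -- the list
  set L : List ℝ := (u :: (List.range (N + 1)).map t) ++ [w] with hL
  have hhead : L.head? = some u := by rw [hL]; simp
  have hlast : L.getLast? = some w := by
    rw [hL, List.getLast?_append]; simp
  have hmaphead : ((List.range (N + 1)).map t).head? = some (t 0) := by
    rw [List.range_succ_eq_map]; simp
  have hmaplast : ((List.range (N + 1)).map t).getLast? = some (t N) := by
    rw [List.getLast?_map, List.range_succ]; simp
  have hchain : ∀ (P : ℝ → ℝ → Prop), P u (t 0) → (∀ i, i + 1 ≤ N → P (t i) (t (i+1))) →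
      P (t N) w → List.IsChain P L := by
    intro P h1 h2 h3
    rw [hL, List.isChain_append]
    refine ⟨?_, List.isChain_singleton _, ?_⟩
    · rw [List.isChain_cons]
      refine ⟨?_, ?_⟩
      · intro y hy; rw [hmaphead] at hy; simp at hy; rwa [← hy]
      · rw [List.isChain_map]
        rw [show N + 1 = (N).succ from rfl, List.isChain_range_succ]
        intro m hm; exact h2 m (by omega)
    · intro a ha b hb
      simp at hb
      rw [List.getLast?_cons, hmaplast] at ha
      simp at ha hb
      subst hb
      subst ha
      exact h3
  have hchainle : List.IsChain (· ≤ ·) L :=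
    hchain _ (htIcc 0 (by omega)).1 htmono (htIcc N (le_refl _)).2
  have hPartL : PartL L u w := ⟨hhead, hlast, hchainle⟩
  refine ⟨L, hPartL, ?_⟩
  · set m := (Δ / N) ^ 2 with hm
    have hm0 : 0 ≤ m := sq_nonneg _
    have hsq : List.IsChain (fun a b => (x b - x a) ^ 2 ≤ m) L := by
      refine hchain _ ?_ ?_ ?_
      · rw [htx 0 (by omega)]
        have : ℓ 0 = x u := by rw [hℓ]; simp
        rw [this]; simpa using hm0
      · intro i hi
        rw [htx i (by omega), htx (i+1) (by omega)]
        have : ℓ (i + 1) - ℓ i = Δ / N := by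
          rw [hℓ]; push_cast; field_simp; ring
        rw [this, hm]
      · rw [htx N (le_refl _), hℓN]
        simpa using hm0
    have hlen : (L.length : ℝ) = N + 3 := by
      rw [hL]; simp; push_cast; ring
    calc lqv x L ≤ L.length * m := lqv_le_of_chain x m hm0 L hsq
      _ = ((N : ℝ) + 3) * (Δ / N) ^ 2 := by rw [hlen, hm]
      _ ≤ (4 * N) * (Δ ^ 2 / N ^ 2) := by
          rw [div_pow]
          have h4 : (N : ℝ) + 3 ≤ 4 * N := by
            have : (1 : ℝ) ≤ N := by exact_mod_cast hN1
            linarith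
          have : (0:ℝ) ≤ Δ ^ 2 / N ^ 2 := by positivity
          nlinarith
      _ = 4 * Δ ^ 2 / N := by field_simp
      _ ≤ δ := by
          rw [div_le_iff₀ hNpos]
          rw [div_le_iff₀ hδ] at hNge
          linarith

lemma chain_map_min {l : List ℝ} (h : List.IsChain (· ≤ ·) l) (s : ℝ) :
    List.IsChain (· ≤ ·) (l.map (fun y => min y s)) := by
  rw [List.isChain_map]
  exact h.imp (fun a b hab => min_le_min hab (le_refl s))

lemma exists_small_chain (x : ℝ → ℝ) (hx : ContinuousOn x (Set.Icc 0 1)) :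
    ∀ (nodes : List ℝ), List.IsChain (· ≤ ·) nodes → (∀ y ∈ nodes, 0 ≤ y ∧ y ≤ 1) →
    ∀ u wend, nodes.head? = some u → nodes.getLast? = some wend →
    ∀ δ : ℝ, 0 < δ → ∃ T, PartL T u wend ∧ (∀ y ∈ nodes, y ∈ T) ∧ lqv x T ≤ δ
  | [], _, _, u, wend, hh, _, _, _ => by simp at hh
  | [u0], _, hb, u, wend, hh, hl, δ, hδ => by
    simp only [List.head?_cons, Option.some_inj] at hh
    simp only [List.getLast?_singleton, Option.some_inj] at hl
    subst hh
    subst hl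
    exact ⟨[u0], ⟨rfl, rfl, List.isChain_singleton _⟩, by simp,
      le_of_lt (by simpa [lqv_single] using hδ)⟩
  | u0 :: w0 :: rest, hc, hb, u, wend, hh, hl, δ, hδ => by
    simp only [List.head?_cons, Option.some_inj] at hh
    subst hh
    have hcc := List.isChain_cons_cons.1 hc
    have hl' : (w0 :: rest).getLast? = some wend := by
      rw [List.getLast?_cons_cons] at hl; exact hl
    obtain ⟨T', hT'1, hT'2, hT'3⟩ := exists_small_chain x hx (w0 :: rest) hcc.2
      (fun y hy => hb y (List.mem_cons_of_mem _ hy)) w0 wend rfl hl' (δ/2) (by linarith)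
    obtain ⟨S, hS1, hS3⟩ := exists_small_part x hx u0 w0 (hb u0 (by simp)).1 hcc.1
      (hb w0 (by simp)).2 (δ/2) (by linarith)
    have hSne : S ≠ [] := hS1.ne_nil
    have hT'ne : T' ≠ [] := hT'1.ne_nil
    refine ⟨S ++ T', ⟨?_, ?_, ?_⟩, ?_, ?_⟩
    · rw [List.head?_append, hS1.1]; rfl
    · rw [List.getLast?_append, hT'1.2.1]; rfl
    · rw [List.isChain_append]
      refine ⟨hS1.2.2, hT'1.2.2, ?_⟩
      intro a ha b hb'
      rw [hS1.2.1] at ha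
      rw [hT'1.1] at hb'
      simp at ha hb'
      subst ha; subst hb'; exact le_refl _
    · intro y hy
      rcases List.mem_cons.1 hy with rfl | hy
      · exact List.mem_append_left _ (head?_mem' hS1.1)
      · exact List.mem_append_right _ (hT'2 y hy)
    · have := lqv_append x S T' hSne hT'ne
      rw [this]
      have e1 : T'.headD 0 = w0 := by
        rw [List.headD_eq_head?, hT'1.1]; rfl
      have e2 : S.getLastD 0 = w0 := by
        rw [List.getLastD_eq_getLast?, hS1.2.1]; rfl
      rw [e1, e2]
      simp only [sub_self]
      ring_nf
      linarith

lemma exists_cell_part (x : ℝ → ℝ) (hx : ContinuousOn x (Set.Icc 0 1))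
    (hbig : ∀ c d : ℝ, 0 ≤ c → c < d → d ≤ 1 →
      ∃ phat : ℕ → ℕ → ℝ, (∀ n, IsPartitionOf (phat n) c d) ∧
        Filter.Tendsto (fun n => qvFull x (phat n)) Filter.atTop Filter.atTop)
    (c d : ℝ) (hc : 0 ≤ c) (hcd : c < d) (hd : d ≤ 1)
    (R : List ℝ) (hR : List.IsChain (· ≤ ·) R) (hRb : ∀ y ∈ R, c ≤ y ∧ y ≤ d)
    (v δ : ℝ) (hδ : 0 < δ) :
    ∃ C, PartL C c d ∧ (∀ y ∈ R, y ∈ C) ∧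
      max v 0 ≤ lqv x C ∧ lqv x C ≤ max v 0 + δ := by
  classical
  set F := R.filter (fun y => decide (c < y)) with hF
  have hFsort : List.IsChain (· ≤ ·) F := by
    rw [List.isChain_iff_pairwise] at hR ⊢
    exact hR.filter _
  have hFmem : ∀ y, y ∈ F ↔ (y ∈ R ∧ c < y) := by
    intro y; rw [hF, List.mem_filter]; simp
  set e := F.headD d with he
  have heprop : c < e ∧ e ≤ d ∧ (∀ y ∈ R, y ≤ c ∨ e ≤ y) := by
    rcases hFeq : F with _ | ⟨f0, F'⟩
    · refine ⟨by rw [he, hFeq]; exact hcd, by rw [he, hFeq]; exact le_refl _, ?_⟩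
      intro y hy
      left
      by_contra hcy
      push_neg at hcy
      have : y ∈ F := (hFmem y).2 ⟨hy, hcy⟩
      rw [hFeq] at this; simp at this
    · have he0 : e = f0 := by rw [he, hFeq]; rfl
      have hf0 : f0 ∈ R ∧ c < f0 := (hFmem f0).1 (by rw [hFeq]; simp)
      refine ⟨by rw [he0]; exact hf0.2, by rw [he0]; exact (hRb f0 hf0.1).2, ?_⟩
      intro y hy
      by_cases hcy : c < y
      · right
        rw [he0]
        have : y ∈ F := (hFmem y).2 ⟨hy, hcy⟩
        rw [hFeq] at this
        exact head_le_mem (by simp) (by rw [← hFeq]; exact hFsort) this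
      · left; linarith
  obtain ⟨hce, hed, hRe⟩ := heprop
  have he1 : e ≤ 1 := le_trans hed hd
  have he0 : 0 ≤ e := le_trans hc hce.le
  -- big partition of [c,e]
  obtain ⟨phat, hphat1, hphat2⟩ := hbig c e hc hce he1
  obtain ⟨mI, hmI⟩ := (hphat2.eventually_ge_atTop (max v 0)).exists
  obtain ⟨hp0, hpmono, N, hpN⟩ := hphat1 mI
  set p := phat mI with hp
  have hpe : ∀ k, p k ≤ e := fun k => by
    calc p k ≤ p (max k N) := hpmono (le_max_left _ _)
      _ = e := hpN _ (le_max_right _ _)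
  have hpc : ∀ k, c ≤ p k := fun k => by
    rw [← hp0]; exact hpmono (Nat.zero_le _)
  set B : List ℝ := (List.range (N + 1)).map p with hB
  have hBlen : B.length = N + 1 := by rw [hB]; simp
  have hBget : ∀ {j : ℕ}, j < N + 1 → B.getD j 0 = p j := by
    intro j hj
    rw [hB, List.getD_eq_getElem _ _ (by simp; omega)]
    simp
  have hBchain : List.IsChain (· ≤ ·) B := by
    rw [hB, List.isChain_map, show N + 1 = (N).succ from rfl, List.isChain_range_succ]
    intro m _; exact hpmono (by omega)
  have hBmem : ∀ y ∈ B, c ≤ y ∧ y ≤ e := by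
    intro y hy
    rw [hB] at hy
    simp at hy
    obtain ⟨i, _, rfl⟩ := hy
    exact ⟨hpc i, hpe i⟩
  have hBhead : B.head? = some c := by
    rw [hB, List.range_succ_eq_map]
    simp [hp0]
  have hBlast : B.getLast? = some e := by
    rw [hB, List.getLast?_map, List.range_succ]
    simp [hpN N (le_refl N)]
  have hBqv : lqv x B = qvFull x p := by
    refine lqv_eq_qvFull x p N (fun k hk => ?_)
    rw [hpN k hk, hpN N (le_refl N)]
  -- the stopped qv function
  set g : ℝ → ℝ := fun s => ∑ j ∈ Finset.range N,
    (x (min (p (j+1)) s) - x (min (p j) s)) ^ 2 with hg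
  have hgB : ∀ s, g s = lqv x (B.map (fun y => min y s)) := by
    intro s
    rw [lqv_stop_sum, hBlen]
    simp only [Nat.add_sub_cancel]
    refine Finset.sum_congr rfl (fun j hj => ?_)
    have hj' := Finset.mem_range.1 hj
    rw [hBget (by omega), hBget (by omega)]
  have hgc : g c = 0 := by
    rw [hg]
    refine Finset.sum_eq_zero (fun j _ => ?_)
    rw [min_eq_right (hpc (j+1)), min_eq_right (hpc j)]
    ring
  have hge : g e = lqv x B := by
    rw [hgB, map_min_eq_self (fun y hy => (hBmem y hy).2)]
  have hgcont : ContinuousOn g (Set.Icc c e) := by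
    rw [hg]
    apply continuousOn_finset_sum
    intro j _
    have hterm : ∀ b : ℝ, 0 ≤ b → b ≤ 1 → ContinuousOn (fun s => x (min b s)) (Set.Icc c e) := by
      intro b hb0 hb1
      refine ContinuousOn.comp hx ((continuous_const.min continuous_id).continuousOn) ?_
      intro s hs
      simp only [Set.mem_Icc] at hs ⊢
      exact ⟨le_min hb0 (le_trans hc hs.1), le_trans (min_le_left _ _) hb1⟩
    have h1 := hterm (p (j+1)) (le_trans hc (hpc _)) (le_trans (hpe _) he1)
    have h2 := hterm (p j) (le_trans hc (hpc _)) (le_trans (hpe _) he1)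
    exact ((h1.sub h2).pow 2)
  have hval : max v 0 ∈ Set.Icc (g c) (g e) := by
    rw [hgc, hge, hBqv]
    exact ⟨le_max_right _ _, hmI⟩
  obtain ⟨s, hsIcc, hgs⟩ := intermediate_value_Icc hce.le hgcont hval
  set B' := B.map (fun y => min y s) with hB'
  have hscIcc : c ≤ s ∧ s ≤ e := hsIcc
  have hB'head : B'.head? = some c := by
    rw [hB', List.head?_map, hBhead]
    simp [min_eq_left hscIcc.1]
  have hB'last : B'.getLast? = some s := by
    rw [hB', List.getLast?_map, hBlast]
    simp [min_eq_right hscIcc.2]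
  have hB'chain := chain_map_min hBchain s
  have hB'qv : lqv x B' = max v 0 := by rw [hB', ← hgB, hgs]
  -- the tail
  set nodes : List ℝ := (s :: R.filter (fun y => decide (s < y))) ++ [d] with hnodes
  have hfiltmem : ∀ y, y ∈ R.filter (fun y => decide (s < y)) ↔ y ∈ R ∧ s < y := by
    intro y; rw [List.mem_filter]; simp
  have hnchain : List.IsChain (· ≤ ·) nodes := by
    rw [hnodes, List.isChain_append]
    refine ⟨?_, List.isChain_singleton _, ?_⟩
    · rw [List.isChain_cons]
      refine ⟨?_, ?_⟩
      · intro y hy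
        have hym := List.mem_of_mem_head? hy
        exact ((hfiltmem y).1 hym).2.le
      · rw [List.isChain_iff_pairwise] at hR ⊢
        exact hR.filter _
    · intro a ha b hb
      simp at hb
      subst hb
      have ham := List.mem_of_mem_getLast? ha
      rcases List.mem_cons.1 ham with rfl | h
      · exact le_trans hscIcc.2 hed
      · exact (hRb a ((hfiltmem a).1 h).1).2
  have hnb : ∀ y ∈ nodes, 0 ≤ y ∧ y ≤ 1 := by
    intro y hy
    rw [hnodes] at hy
    simp only [List.mem_append, List.mem_cons] at hy
    rcases hy with (rfl | h) | h
    · exact ⟨le_trans hc hscIcc.1, le_trans hscIcc.2 he1⟩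
    · have := hRb y ((hfiltmem y).1 h).1
      exact ⟨le_trans hc this.1, le_trans this.2 hd⟩
    · simp at h; subst h; exact ⟨le_trans hc hcd.le, hd⟩
  have hnhead : nodes.head? = some s := by rw [hnodes]; rfl
  have hnlast : nodes.getLast? = some d := by
    rw [hnodes, List.getLast?_append]; rfl
  obtain ⟨T, hT1, hT2, hT3⟩ := exists_small_chain x hx nodes hnchain hnb s d
    hnhead hnlast δ hδ
  -- assemble
  have hB'ne : B' ≠ [] := by rw [hB', hB]; simp
  have hTne : T ≠ [] := hT1.ne_nil
  refine ⟨B' ++ T, ⟨?_, ?_, ?_⟩, ?_, ?_⟩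

  · rw [List.head?_append, hB'head]; rfl
  · rw [List.getLast?_append, hT1.2.1]; rfl
  · rw [List.isChain_append]
    refine ⟨hB'chain, hT1.2.2, ?_⟩
    intro a ha b hb
    rw [hB'last] at ha
    rw [hT1.1] at hb
    simp at ha hb
    subst ha; subst hb
    exact le_refl _
  · -- membership of R
    intro y hy
    rcases hRe y hy with hyc | hye
    · have : y = c := le_antisymm hyc (hRb y hy).1
      subst this
      exact List.mem_append_left _ (head?_mem' hB'head)
    · by_cases hsy : s < y
      · refine List.mem_append_right _ (hT2 y ?_)
        rw [hnodes]
        simp only [List.mem_append, List.mem_cons]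
        left; right
        exact (hfiltmem y).2 ⟨hy, hsy⟩
      · push_neg at hsy
        have : y = s := le_antisymm hsy (le_trans hscIcc.2 hye)
        subst this
        exact List.mem_append_right _ (hT2 _ (by rw [hnodes]; simp))
  · rw [lqv_append x B' T hB'ne hTne]
    have e1 : T.headD 0 = s := by rw [List.headD_eq_head?, hT1.1]; rfl
    have e2 : B'.getLastD 0 = s := by rw [List.getLastD_eq_getLast?, hB'last]; rfl
    rw [e1, e2, hB'qv]
    have h0 : (x s - x s) ^ 2 = 0 := by ring
    rw [h0]
    have := lqv_nonneg x T
    constructor <;> linarith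

lemma chain'_of_all_eq {c : ℝ} : ∀ {l : List ℝ}, (∀ y ∈ l, y = c) → List.IsChain (· ≤ ·) l
  | [], _ => List.isChain_nil
  | [_], _ => List.isChain_singleton _
  | u :: w :: r, h => by
    rw [List.isChain_cons_cons]
    refine ⟨?_, chain'_of_all_eq (fun y hy => h y (List.mem_cons_of_mem _ hy))⟩
    rw [h u (by simp), h w (by simp)]

lemma getLast?_of_all_eq {c : ℝ} : ∀ {l : List ℝ}, (∀ y ∈ l, y = c) → l ≠ [] →
    l.getLast? = some c := by
  intro l h hne
  rw [List.getLast?_eq_getLast hne, Option.some_inj]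
  exact h _ (List.getLast_mem hne)

lemma stageAux (x ab : ℝ → ℝ) (hx : ContinuousOn x (Set.Icc 0 1))
    (hbig : ∀ c d : ℝ, 0 ≤ c → c < d → d ≤ 1 →
      ∃ phat : ℕ → ℕ → ℝ, (∀ n, IsPartitionOf (phat n) c d) ∧
        Filter.Tendsto (fun n => qvFull x (phat n)) Filter.atTop Filter.atTop)
    (hab : Monotone ab) :
    ∀ (ms : List ℝ) (c : ℝ) (L : List ℝ) (q β ε : ℝ),
    List.IsChain (· < ·) (c :: ms) →
    (∀ y ∈ c :: ms, 0 ≤ y ∧ y ≤ 1) →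
    (c :: ms).getLastD 0 = 1 →
    List.IsChain (· ≤ ·) L →
    (∀ y ∈ L, c ≤ y ∧ y ≤ 1) →
    ab c ≤ q → q ≤ ab c + β → 0 ≤ β → 0 < ε →
    ∃ C, C.head? = some c ∧ C.getLast? = some 1 ∧ List.IsChain (· ≤ ·) C ∧
      (∀ y ∈ L, y ∈ C) ∧ (∀ p ∈ ms, p ∈ C) ∧
      (∀ p ∈ ms, ab p ≤ q + lqv x (C.map (fun y => min y p)) ∧
        q + lqv x (C.map (fun y => min y p)) ≤ ab p + β + ε) := by
  intro ms
  induction ms with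
  | nil =>
    intro c L q β ε h1 h2 h3 hL1 hL2 hq1 hq2 hβ hε
    simp only [List.getLastD_cons, List.getLastD_nil] at h3
    have hLc : ∀ y ∈ c :: L, y = c := by
      intro y hy
      rcases List.mem_cons.1 hy with rfl | hy
      · rfl
      · exact le_antisymm (h3 ▸ (hL2 y hy).2) (hL2 y hy).1
    exact ⟨c :: L, rfl, (getLast?_of_all_eq hLc (by simp)).trans (by rw [h3]),
      chain'_of_all_eq hLc, fun y hy => List.mem_cons_of_mem _ hy, by simp, by simp⟩
  | cons p ms' ih =>
    intro c L q β ε h1 h2 h3 hL1 hL2 hq1 hq2 hβ hε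
    have hcp : c < p := (List.isChain_cons_cons.1 h1).1
    have hchain' : List.IsChain (· < ·) (p :: ms') := (List.isChain_cons_cons.1 h1).2
    have hc0 : 0 ≤ c := (h2 c (by simp)).1
    have hp1 : p ≤ 1 := (h2 p (by simp)).2
    -- the cell partition on [c,p]
    set R := L.filter (fun y => decide (y ≤ p)) with hRdef
    have hRsort : List.IsChain (· ≤ ·) R := by
      rw [List.isChain_iff_pairwise] at hL1 ⊢
      exact hL1.filter _
    have hRmem : ∀ y, y ∈ R ↔ y ∈ L ∧ y ≤ p := by
      intro y; rw [hRdef, List.mem_filter]; simp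
    obtain ⟨C₁, hC₁part, hC₁mem, hC₁lb, hC₁ub⟩ := exists_cell_part x hx hbig c p hc0 hcp hp1
      R hRsort (fun y hy => ⟨(hL2 y ((hRmem y).1 hy).1).1, ((hRmem y).1 hy).2⟩)
      (ab p - q) (ε/2) (by linarith)
    set q' := q + lqv x C₁ with hq'
    have hqlow : ab p ≤ q' := by
      rcases le_total 0 (ab p - q) with hv | hv
      · rw [max_eq_left hv] at hC₁lb; rw [hq']; linarith
      · rw [max_eq_right hv] at hC₁lb; rw [hq']; linarith
    have hqhigh : q' ≤ ab p + β + ε/2 := by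
      rcases le_total 0 (ab p - q) with hv | hv
      · rw [max_eq_left hv] at hC₁ub; rw [hq']; linarith
      · rw [max_eq_right hv] at hC₁ub
        have := hab hcp.le
        rw [hq']; linarith
    -- recursive call on [p, 1]
    set L' := L.filter (fun y => decide (p ≤ y)) with hL'def
    have hL'sort : List.IsChain (· ≤ ·) L' := by
      rw [List.isChain_iff_pairwise] at hL1 ⊢
      exact hL1.filter _
    have hL'mem : ∀ y, y ∈ L' ↔ y ∈ L ∧ p ≤ y := by
      intro y; rw [hL'def, List.mem_filter]; simp
    have h3' : (p :: ms').getLastD 0 = 1 := by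
      have e : (c :: p :: ms').getLastD 0 = (p :: ms').getLastD 0 := by
        simp [List.getLastD_cons]
      rw [← e]; exact h3
    obtain ⟨C₂, hC₂head, hC₂last, hC₂chain, hC₂L, hC₂ms, hC₂qv⟩ :=
      ih p L' q' (β + ε/2) (ε/2) hchain'
        (fun y hy => h2 y (List.mem_cons_of_mem _ hy)) h3' hL'sort
        (fun y hy => ⟨((hL'mem y).1 hy).2, (hL2 y ((hL'mem y).1 hy).1).2⟩)
        hqlow (by linarith) (by linarith) (by linarith)
    have hC₁ne : C₁ ≠ [] := hC₁part.ne_nil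
    have hC₂ne : C₂ ≠ [] := by rintro rfl; simp at hC₂head
    have hC₁bounds := fun y hy => hC₁part.mem_Icc (y := y) hy
    have hC₂lbound : ∀ y ∈ C₂, p ≤ y := fun y hy => head_le_mem hC₂head hC₂chain hy
    -- key computation of stopped qv of C₁ ++ C₂ at a point p'' ≥ p
    have hkey : ∀ p'' : ℝ, p ≤ p'' →
        lqv x ((C₁ ++ C₂).map (fun y => min y p'')) =
          lqv x C₁ + lqv x (C₂.map (fun y => min y p'')) := by
      intro p'' hpp
      rw [List.map_append]
      have hmapC₁ : C₁.map (fun y => min y p'') = C₁ :=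
        map_min_eq_self (fun y hy => le_trans (hC₁bounds y hy).2 hpp)
      rw [hmapC₁]
      have hmne : C₂.map (fun y => min y p'') ≠ [] := by
        simpa using hC₂ne
      rw [lqv_append x C₁ _ hC₁ne hmne]
      have e1 : (C₂.map (fun y => min y p'')).headD 0 = p := by
        rw [List.headD_eq_head?, List.head?_map, hC₂head]
        simp [min_eq_left hpp]
      have e2 : C₁.getLastD 0 = p := by
        rw [List.getLastD_eq_getLast?, hC₁part.2.1]; rfl
      rw [e1, e2]
      have h0 : (x p - x p) ^ 2 = 0 := by ring
      rw [h0]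
      ring
    have hstopp : lqv x ((C₁ ++ C₂).map (fun y => min y p)) = lqv x C₁ := by
      rw [hkey p (le_refl _)]
      have : lqv x (C₂.map (fun y => min y p)) = 0 := by
        refine lqv_of_const x p _ (fun y hy => ?_)
        simp only [List.mem_map] at hy
        obtain ⟨z, hz, rfl⟩ := hy
        exact min_eq_right (hC₂lbound z hz)
      rw [this]; ring
    refine ⟨C₁ ++ C₂, ?_, ?_, ?_, ?_, ?_, ?_⟩
    · rw [List.head?_append, hC₁part.1]; rfl
    · rw [List.getLast?_append, hC₂last]; rfl
    · rw [List.isChain_append]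
      refine ⟨hC₁part.2.2, hC₂chain, ?_⟩
      intro a' ha' b' hb'
      rw [hC₁part.2.1] at ha'
      rw [hC₂head] at hb'
      simp at ha' hb'
      subst ha'; subst hb'
      exact le_refl _
    · intro y hy
      by_cases hyp : y ≤ p
      · exact List.mem_append_left _ (hC₁mem y ((hRmem y).2 ⟨hy, hyp⟩))
      · push_neg at hyp
        exact List.mem_append_right _ (hC₂L y ((hL'mem y).2 ⟨hy, hyp.le⟩))
    · intro p'' hp''
      rcases List.mem_cons.1 hp'' with rfl | hp''
      · exact List.mem_append_left _ (getLast?_mem' hC₁part.2.1)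
      · exact List.mem_append_right _ (hC₂ms p'' hp'')
    · intro p'' hp''
      rcases List.mem_cons.1 hp'' with rfl | hp''
      · rw [hstopp]
        exact ⟨hqlow, by linarith⟩
      · have hple : p ≤ p'' := by
          rw [List.isChain_iff_pairwise] at hchain'
          exact ((List.pairwise_cons.1 hchain').1 p'' hp'').le
        rw [hkey p'' hple]
        have := hC₂qv p'' hp''
        constructor
        · calc ab p'' ≤ q' + lqv x (C₂.map (fun y => min y p'')) := this.1
            _ = q + (lqv x C₁ + lqv x (C₂.map (fun y => min y p''))) := by rw [hq']; ring
        · calc q + (lqv x C₁ + lqv x (C₂.map (fun y => min y p'')))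
              = q' + lqv x (C₂.map (fun y => min y p'')) := by rw [hq']; ring
            _ ≤ ab p'' + (β + ε/2) + ε/2 := this.2
            _ = ab p'' + β + ε := by ring

lemma exists_chain_seq {α : Type*} (P : ℕ → α → Prop) (Rel : α → α → Prop)
    (h0 : ∃ l, P 0 l) (hstep : ∀ n l, P n l → ∃ l', P (n+1) l' ∧ Rel l l') :
    ∃ f : ℕ → α, (∀ n, P n (f n)) ∧ ∀ n, Rel (f n) (f (n+1)) := by
  classical
  let g : ∀ n : ℕ, {l : α // P n l} := fun n => Nat.rec
    ⟨Classical.choose h0, Classical.choose_spec h0⟩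
    (fun n ih => ⟨Classical.choose (hstep n ih.1 ih.2),
      (Classical.choose_spec (hstep n ih.1 ih.2)).1⟩) n
  exact ⟨fun n => (g n).1, fun n => (g n).2,
    fun n => (Classical.choose_spec (hstep n (g n).1 (g n).2)).2⟩

lemma exists_stage (x ab : ℝ → ℝ) (hx : ContinuousOn x (Set.Icc 0 1))
    (hbig : ∀ c d : ℝ, 0 ≤ c → c < d → d ≤ 1 →
      ∃ phat : ℕ → ℕ → ℝ, (∀ n, IsPartitionOf (phat n) c d) ∧
        Filter.Tendsto (fun n => qvFull x (phat n)) Filter.atTop Filter.atTop)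
    (hab : Monotone ab) (hab0 : ab 0 = 0)
    (M : Finset ℝ) (hM : ∀ y ∈ M, 0 ≤ y ∧ y ≤ 1) (h1M : (1:ℝ) ∈ M)
    (ε : ℝ) (hε : 0 < ε)
    (L : List ℝ) (hL : PartL L 0 1) :
    ∃ C, PartL C 0 1 ∧ (∀ y ∈ L, y ∈ C) ∧ (∀ p ∈ M, p ∈ C) ∧
      (∀ p ∈ M, ab p ≤ lqv x (C.map (fun y => min y p)) ∧
        lqv x (C.map (fun y => min y p)) ≤ ab p + ε) := by
  classical
  set ms := (M.erase 0).sort (· ≤ ·) with hms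
  have hmsmem : ∀ y, y ∈ ms ↔ y ∈ M ∧ y ≠ 0 := by
    intro y
    rw [hms, Finset.mem_sort, Finset.mem_erase]
    tauto
  have hmspos : ∀ y ∈ ms, 0 < y := by
    intro y hy
    have h := (hmsmem y).1 hy
    have := (hM y h.1).1
    rcases lt_or_eq_of_le this with h' | h'
    · exact h'
    · exact absurd h'.symm h.2
  have hmssorted : List.IsChain (· ≤ ·) ms := by
    rw [List.isChain_iff_pairwise]
    exact (M.erase 0).pairwise_sort (· ≤ ·)
  have hmslt : List.IsChain (· < ·) ms := by
    rw [List.isChain_iff_pairwise]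
    have h1 := (M.erase 0).pairwise_sort (· ≤ ·)
    have h2 := (M.erase 0).sort_nodup (· ≤ ·)
    rw [List.Nodup] at h2
    exact (h1.and h2).imp (fun h => lt_of_le_of_ne h.1 h.2)
  have hchain0 : List.IsChain (· < ·) ((0:ℝ) :: ms) := by
    rw [List.isChain_cons]
    exact ⟨fun y hy => hmspos y (List.mem_of_mem_head? hy), hmslt⟩
  have h1ms : (1:ℝ) ∈ ms := (hmsmem 1).2 ⟨h1M, one_ne_zero⟩
  have hmsne : ms ≠ [] := by rintro h; rw [h] at h1ms; simp at h1ms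
  have hlast : ((0:ℝ) :: ms).getLastD 0 = 1 := by
    rw [List.getLastD_cons]
    have hg : ms.getLast? = some (ms.getLastD 0) := by
      rw [List.getLastD_eq_getLast?]
      cases hgl : ms.getLast? with
      | none => rw [List.getLast?_eq_none_iff] at hgl; exact absurd hgl hmsne
      | some z => rfl
    have hmem := getLast?_mem' hg
    have hle : ms.getLastD 0 ≤ 1 := (hM _ ((hmsmem _).1 hmem).1).2
    have hge : 1 ≤ ms.getLastD 0 := mem_le_getLast hg hmssorted h1ms
    have : ms.getLastD 0 = 1 := le_antisymm hle hge
    rw [List.getLastD_eq_getLast?] at this ⊢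
    exact this
  have hmsbd : ∀ y ∈ (0:ℝ) :: ms, 0 ≤ y ∧ y ≤ 1 := by
    intro y hy
    rcases List.mem_cons.1 hy with rfl | hy
    · norm_num
    · exact hM y ((hmsmem y).1 hy).1
  have hLbd : ∀ y ∈ L, (0:ℝ) ≤ y ∧ y ≤ 1 := fun y hy => hL.mem_Icc hy
  obtain ⟨C, hC1, hC2, hC3, hC4, hC5, hC6⟩ := stageAux x ab hx hbig hab ms 0 L 0 0 ε
    hchain0 hmsbd hlast hL.2.2 hLbd (le_of_eq hab0) (by rw [hab0]; norm_num)
    (le_refl 0) hε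
  have hCpos : ∀ y ∈ C, 0 ≤ y := fun y hy => head_le_mem hC1 hC3 hy
  refine ⟨C, ⟨hC1, hC2, hC3⟩, hC4, ?_, ?_⟩
  · intro p hp
    by_cases hp0 : p = 0
    · subst hp0; exact head?_mem' hC1
    · exact hC5 p ((hmsmem p).2 ⟨hp, hp0⟩)
  · intro p hp
    by_cases hp0 : p = 0
    · subst hp0
      have : lqv x (C.map (fun y => min y 0)) = 0 := by
        refine lqv_of_const x 0 _ (fun y hy => ?_)
        simp only [List.mem_map] at hy
        obtain ⟨z, hz, rfl⟩ := hy
        exact min_eq_right (hCpos z hz)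
      rw [this, hab0]
      exact ⟨le_refl _, by linarith⟩
    · have := hC6 p ((hmsmem p).2 ⟨hp, hp0⟩)
      constructor <;> [linarith [this.1]; linarith [this.2]]

end QVTool

set_option maxHeartbeats 1000000 in
open QVTool in
/-- If the continuous path `x` has infinite quadratic variation on every subinterval of
`[0,1]` (along suitable partitions), then for any increasing `a : [0,1] → [0,∞)` with
`a(0)=0` there exist refining partitions `π_n ⊇ {k·2⁻ⁿ}` with `⟨x⟩^{π_n}_t → a(t)` for all
`t ∈ [0,1]`, uniformly if `a` is continuous. -/
theorem exists_partitions_qv_tendsto_arbitrary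
    (x a : ℝ → ℝ)
    (hx : ContinuousOn x (Set.Icc 0 1))
    (hbig : ∀ c d : ℝ, 0 ≤ c → c < d → d ≤ 1 →
      ∃ phat : ℕ → ℕ → ℝ, (∀ n, IsPartitionOf (phat n) c d) ∧
        Tendsto (fun n => qvFull x (phat n)) atTop atTop)
    (ha : MonotoneOn a (Set.Icc 0 1))
    (ha0 : a 0 = 0) (hapos : ∀ t ∈ Set.Icc (0 : ℝ) 1, 0 ≤ a t) :
    ∃ π : ℕ → ℕ → ℝ,
      (∀ n, IsPartition01 (π n)) ∧
      (∀ n, Set.range (π n) ⊆ Set.range (π (n + 1))) ∧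
      (∀ n (k : ℕ), k ≤ 2 ^ n → ((k : ℝ) / 2 ^ n) ∈ Set.range (π n)) ∧
      (∀ t ∈ Set.Icc (0 : ℝ) 1,
        Tendsto (fun n => qvAt x (π n) t) atTop (nhds (a t))) ∧
      (ContinuousOn a (Set.Icc 0 1) →
        TendstoUniformlyOn (fun n => qvAt x (π n)) a atTop (Set.Icc 0 1)) := by
  classical
  -- extension of `a` to all of ℝ
  set clamp : ℝ → ℝ := fun t => max 0 (min 1 t) with hclampdef
  have hclampmem : ∀ t, clamp t ∈ Set.Icc (0:ℝ) 1 := fun t =>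
    ⟨le_max_left _ _, max_le (by norm_num) (min_le_left _ _)⟩
  have hclampid : ∀ t ∈ Set.Icc (0:ℝ) 1, clamp t = t := by
    intro t ht
    rw [hclampdef]
    simp only
    rw [min_eq_right ht.2, max_eq_right ht.1]
  have hclampmono : Monotone clamp := by
    intro u v huv
    exact max_le_max (le_refl _) (min_le_min (le_refl _) huv)
  have hclampcont : Continuous clamp := continuous_const.max (continuous_const.min continuous_id)
  set ab : ℝ → ℝ := fun t => a (clamp t) with habdef
  have habm : Monotone ab := fun u v huv => ha (hclampmem u) (hclampmem v) (hclampmono huv)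
  have hab0 : ab 0 = 0 := by
    rw [habdef]
    simp only
    rw [hclampid 0 (by norm_num)]
    exact ha0
  have habeq : ∀ t ∈ Set.Icc (0:ℝ) 1, ab t = a t := by
    intro t ht
    rw [habdef]
    simp only
    rw [hclampid t ht]
  -- the jump points
  set SS : Set ℝ := {t | ¬ContinuousAt ab t} ∪ {1} with hSSdef
  have hSSc : SS.Countable := habm.countable_not_continuousAt.union (Set.countable_singleton 1)
  obtain ⟨s, hsrange⟩ := hSSc.exists_eq_range ⟨1, Or.inr rfl⟩
  have hskmem : ∀ k, s k ∈ SS := fun k => by rw [hsrange]; exact Set.mem_range_self k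
  have hSSIcc : ∀ t ∈ SS, 0 ≤ t ∧ t ≤ 1 := by
    rintro t (ht | ht)
    · by_contra hc
      push_neg at hc
      apply ht
      rcases lt_or_ge t 0 with h0 | h0
      · have hev : ∀ᶠ u in nhds t, ab u = a 0 := by
          filter_upwards [Iio_mem_nhds h0] with u hu
          rw [habdef]
          simp only
          have : clamp u = 0 := by
            rw [hclampdef]
            simp only
            rw [min_eq_right (by linarith [Set.mem_Iio.1 hu] : u ≤ 1),
              max_eq_left (le_of_lt (Set.mem_Iio.1 hu))]
          rw [this]
        exact (continuousAt_const (y := a 0)).congr (Filter.EventuallyEq.symm hev)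
      · have h1 : 1 < t := hc h0
        have hev : ∀ᶠ u in nhds t, ab u = a 1 := by
          filter_upwards [Ioi_mem_nhds h1] with u hu
          rw [habdef]
          simp only
          have : clamp u = 1 := by
            rw [hclampdef]
            simp only
            rw [min_eq_left (le_of_lt (Set.mem_Ioi.1 hu)), max_eq_right (by norm_num : (0:ℝ) ≤ 1)]
          rw [this]
        exact (continuousAt_const (y := a 1)).congr (Filter.EventuallyEq.symm hev)
    · simp at ht; subst ht; norm_num
  -- the mandatory finite sets
  set dy : ℕ → Finset ℝ := fun n => (Finset.range (2^n+1)).image (fun k : ℕ => (k:ℝ)/2^n) with hdydef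
  set M : ℕ → Finset ℝ := fun n => dy n ∪ (Finset.range (n+1)).image s with hMdef
  have hdyM : ∀ n (k : ℕ), k ≤ 2^n → ((k:ℝ)/2^n) ∈ M n := by
    intro n k hk
    rw [hMdef]
    exact Finset.mem_union_left _ (Finset.mem_image.2 ⟨k, Finset.mem_range.2 (by omega), rfl⟩)
  have h0M : ∀ n, (0:ℝ) ∈ M n := by
    intro n
    have := hdyM n 0 (Nat.zero_le _)
    simpa using this
  have h1M : ∀ n, (1:ℝ) ∈ M n := by
    intro n
    have := hdyM n (2^n) (le_refl _)
    have h2 : ((2^n : ℕ) : ℝ)/2^n = 1 := by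
      push_cast
      field_simp
    rwa [h2] at this
  have hM01 : ∀ n, ∀ y ∈ M n, 0 ≤ y ∧ y ≤ 1 := by
    intro n y hy
    rw [hMdef] at hy
    rcases Finset.mem_union.1 hy with hy | hy
    · rw [hdydef] at hy
      obtain ⟨k, hk, rfl⟩ := Finset.mem_image.1 hy
      rw [Finset.mem_range] at hk
      have h2n : (0:ℝ) < 2^n := by positivity
      constructor
      · positivity
      · rw [div_le_one h2n]
        have : (k:ℝ) ≤ ((2^n : ℕ) : ℝ) := by exact_mod_cast (by omega : k ≤ 2^n)
        push_cast at this ⊢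
        linarith
    · obtain ⟨k, _, rfl⟩ := Finset.mem_image.1 hy
      exact hSSIcc _ (hskmem k)
  have hMmono : ∀ n m, n ≤ m → M n ⊆ M m := by
    have hstep : ∀ n, M n ⊆ M (n+1) := by
      intro n y hy
      rw [hMdef] at hy ⊢
      rcases Finset.mem_union.1 hy with hy | hy
      · rw [hdydef] at hy
        obtain ⟨k, hk, rfl⟩ := Finset.mem_image.1 hy
        rw [Finset.mem_range] at hk
        refine Finset.mem_union_left _ (Finset.mem_image.2 ⟨2*k, Finset.mem_range.2 (by ring_nf; omega), ?_⟩)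
        push_cast
        rw [pow_succ]
        field_simp
      · obtain ⟨k, hk, rfl⟩ := Finset.mem_image.1 hy
        rw [Finset.mem_range] at hk
        exact Finset.mem_union_right _ (Finset.mem_image.2 ⟨k, Finset.mem_range.2 (by omega), rfl⟩)
    intro n m hnm
    induction m with
    | zero => have : n = 0 := by omega
              subst this; exact subset_refl _
    | succ m ih =>
      rcases Nat.lt_or_ge n (m+1) with h | h
      · exact subset_trans (ih (by omega)) (hstep m)
      · have : n = m + 1 := by omega
        subst this; exact subset_refl _
  have hsM : ∀ k n, k ≤ n → s k ∈ M n := by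
    intro k n hk
    rw [hMdef]
    exact Finset.mem_union_right _ (Finset.mem_image.2 ⟨k, Finset.mem_range.2 (by omega), rfl⟩)
  -- construct the refining sequence of lists
  set P : ℕ → List ℝ → Prop := fun n C => PartL C 0 1 ∧ (∀ p ∈ M n, p ∈ C) ∧
    (∀ p ∈ M n, ab p ≤ lqv x (C.map (fun y => min y p)) ∧
      lqv x (C.map (fun y => min y p)) ≤ ab p + (1/2)^n) with hPdef
  have hstage : ∀ n (L : List ℝ), PartL L 0 1 → ∃ C, P n C ∧ (∀ y ∈ L, y ∈ C) := by
    intro n L hL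
    obtain ⟨C, h1, h2, h3, h4⟩ := exists_stage x ab hx hbig habm hab0 (M n) (hM01 n)
      (h1M n) ((1/2)^n) (by positivity) L hL
    exact ⟨C, ⟨h1, h3, h4⟩, h2⟩
  have hbase : PartL [(0:ℝ), 1] 0 1 := by
    refine ⟨rfl, rfl, ?_⟩
    rw [List.isChain_cons_cons]
    exact ⟨by norm_num, List.isChain_singleton _⟩
  obtain ⟨f, hfP, hfR⟩ := exists_chain_seq P (fun l l' => ∀ y ∈ l, y ∈ l')
    (by obtain ⟨C, hC, _⟩ := hstage 0 [0,1] hbase; exact ⟨C, hC⟩)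
    (fun n l hl => by
      obtain ⟨C, hC, hsub⟩ := hstage (n+1) l hl.1
      exact ⟨C, hC, hsub⟩)
  -- key two-sided bound
  have key : ∀ n (t : ℝ), t ∈ Set.Icc (0:ℝ) 1 →
      ∃ pl qr : ℝ, pl ∈ M n ∧ qr ∈ M n ∧ pl ≤ t ∧ t ≤ qr ∧
        t - pl ≤ (1/2)^n ∧ qr - t ≤ (1/2)^n ∧
        (t ∈ M n → pl = t ∧ qr = t) ∧
        ab pl ≤ qvAt x (seqOf (f n)) t ∧
        (∀ η, 0 ≤ η → (∀ u, pl ≤ u → u ≤ t → (x t - x u)^2 ≤ η) →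
          qvAt x (seqOf (f n)) t ≤ ab qr + (1/2)^n + η) := by
    intro n t ht
    obtain ⟨hfPart, hfM, hfqv⟩ := hfP n
    have h2n : (0:ℝ) < 2^n := by positivity
    have h12 : ((1:ℝ)/2)^n = 1/2^n := by rw [div_pow, one_pow]
    -- the nearest mandatory points
    set Fp := (M n).filter (· ≤ t) with hFp
    have hFpne : Fp.Nonempty := ⟨0, Finset.mem_filter.2 ⟨h0M n, ht.1⟩⟩
    set pl := Fp.max' hFpne with hpl
    have hplM : pl ∈ M n := (Finset.mem_filter.1 (Fp.max'_mem hFpne)).1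
    have hplt : pl ≤ t := (Finset.mem_filter.1 (Fp.max'_mem hFpne)).2
    set Fq := (M n).filter (t ≤ ·) with hFq
    have hFqne : Fq.Nonempty := ⟨1, Finset.mem_filter.2 ⟨h1M n, ht.2⟩⟩
    set qr := Fq.min' hFqne with hqr
    have hqrM : qr ∈ M n := (Finset.mem_filter.1 (Fq.min'_mem hFqne)).1
    have htqr : t ≤ qr := (Finset.mem_filter.1 (Fq.min'_mem hFqne)).2
    -- floor dyadic
    have hplclose : t - pl ≤ (1/2)^n := by
      set k := ⌊t * 2^n⌋₊ with hk
      have hk1 : (k:ℝ) ≤ t * 2^n := Nat.floor_le (mul_nonneg ht.1 h2n.le)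
      have hk2 : k ≤ 2^n := by
        have h1 : t * 2^n ≤ ((2^n : ℕ) : ℝ) := by push_cast; nlinarith [ht.2]
        calc k ≤ ⌊((2^n : ℕ):ℝ)⌋₊ := Nat.floor_le_floor h1
          _ = 2^n := Nat.floor_natCast _
      have hfd_le : (k:ℝ)/2^n ≤ t := by rw [div_le_iff₀ h2n]; exact hk1
      have hple : (k:ℝ)/2^n ≤ pl := by
        rw [hpl]
        exact Finset.le_max' Fp _ (Finset.mem_filter.2 ⟨hdyM n k hk2, hfd_le⟩)
      have hlt : t * 2^n < k + 1 := Nat.lt_floor_add_one _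
      have h3 : t ≤ ((k:ℝ) + 1)/2^n := by rw [le_div_iff₀ h2n]; linarith
      rw [h12]
      have : ((k:ℝ)+1)/2^n - (k:ℝ)/2^n = 1/2^n := by ring
      linarith
    have hqrclose : qr - t ≤ (1/2)^n := by
      set k := ⌈t * 2^n⌉₊ with hk
      have hk1 : t * 2^n ≤ (k:ℝ) := Nat.le_ceil _
      have hk2 : k ≤ 2^n := by
        rw [hk, Nat.ceil_le]
        push_cast
        nlinarith [ht.2]
      have hcd_ge : t ≤ (k:ℝ)/2^n := by rw [le_div_iff₀ h2n]; exact hk1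
      have hqle : qr ≤ (k:ℝ)/2^n := by
        rw [hqr]
        exact Finset.min'_le Fq _ (Finset.mem_filter.2 ⟨hdyM n k hk2, hcd_ge⟩)
      have hlt : (k:ℝ) < t * 2^n + 1 := Nat.ceil_lt_add_one (mul_nonneg ht.1 h2n.le)
      have h3 : (k:ℝ)/2^n ≤ t + 1/2^n := by
        rw [div_le_iff₀ h2n]
        have : (t + 1/2^n) * 2^n = t * 2^n + 1 := by field_simp
        rw [this]
        linarith
      rw [h12]
      linarith
    have htM : t ∈ M n → pl = t ∧ qr = t := by
      intro htm
      constructor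
      · refine le_antisymm hplt ?_
        rw [hpl]
        exact Finset.le_max' Fp _ (Finset.mem_filter.2 ⟨htm, le_refl _⟩)
      · refine le_antisymm ?_ htqr
        rw [hqr]
        exact Finset.min'_le Fq _ (Finset.mem_filter.2 ⟨htm, le_refl _⟩)
    have hqvt := qvAt_eq_lqv x hfPart t
    have hqvp := qvAt_eq_lqv x hfPart pl
    have hqvq := qvAt_eq_lqv x hfPart qr
    refine ⟨pl, qr, hplM, hqrM, hplt, htqr, hplclose, hqrclose, htM, ?_, ?_⟩
    · calc ab pl ≤ lqv x ((f n).map (fun y => min y pl)) := (hfqv pl hplM).1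
        _ ≤ lqv x ((f n).map (fun y => min y t)) :=
            lqv_stop_mono x hfPart.2.2 (hfM pl hplM) hplt
        _ = qvAt x (seqOf (f n)) t := hqvt.symm
    · intro η hη hoscη
      calc qvAt x (seqOf (f n)) t = lqv x ((f n).map (fun y => min y t)) := hqvt
        _ ≤ lqv x ((f n).map (fun y => min y qr)) + η :=
            lqv_stop_le x hfPart.2.2 (hfM pl hplM) (hfM qr hqrM) hplt htqr hη hoscη
        _ ≤ (ab qr + (1/2)^n) + η := by linarith [(hfqv qr hqrM).2]
        _ = ab qr + (1/2)^n + η := by ring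
  -- oscillation control for x
  have hxu : UniformContinuousOn x (Set.Icc 0 1) :=
    isCompact_Icc.uniformContinuousOn_of_continuous hx
  rw [Metric.uniformContinuousOn_iff] at hxu
  have hosc : ∀ ε : ℝ, 0 < ε → ∃ δ : ℝ, 0 < δ ∧ ∀ u ∈ Set.Icc (0:ℝ) 1, ∀ v ∈ Set.Icc (0:ℝ) 1,
      |u - v| ≤ δ → (x u - x v)^2 ≤ ε := by
    intro ε hε
    have hm : (0:ℝ) < min 1 ε := lt_min one_pos hε
    obtain ⟨δ, hδ, hδ'⟩ := hxu (min 1 ε) hm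
    refine ⟨δ/2, by linarith, fun u hu v hv huv => ?_⟩
    have := hδ' u hu v hv (by rw [Real.dist_eq]; linarith)
    rw [Real.dist_eq] at this
    have h1 : |x u - x v| ≤ min 1 ε := this.le
    have h2 : (x u - x v)^2 = |x u - x v|^2 := (sq_abs _).symm
    rw [h2]
    have hm1 : |x u - x v| ≤ 1 := le_trans h1 (min_le_left _ _)
    have hm2 : |x u - x v| ≤ ε := le_trans h1 (min_le_right _ _)
    nlinarith [abs_nonneg (x u - x v)]
  have hev : ∀ θ : ℝ, 0 < θ → ∃ N : ℕ, ∀ n ≥ N, ((1/2 : ℝ))^n < θ := by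
    intro θ hθ
    have h := tendsto_pow_atTop_nhds_zero_of_lt_one (by norm_num : (0:ℝ) ≤ 1/2)
      (by norm_num : (1/2:ℝ) < 1)
    have h2 := h.eventually (eventually_lt_nhds hθ)
    exact Filter.eventually_atTop.1 h2
  refine ⟨fun n => seqOf (f n), fun n => seqOf_isPartition01 (hfP n).1, ?_, ?_, ?_, ?_⟩
  · intro n
    rw [range_seqOf (hfP n).1, range_seqOf (hfP (n+1)).1]
    exact fun y hy => hfR n y hy
  · intro n k hk
    rw [range_seqOf (hfP n).1]
    exact (hfP n).2.1 _ (hdyM n k hk)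
  · -- pointwise convergence
    intro t ht
    rw [Metric.tendsto_atTop]
    intro ε hε
    obtain ⟨δx, hδx0, hδx⟩ := hosc (ε/4) (by linarith)
    by_cases hjump : ∃ n0, t ∈ M n0
    · obtain ⟨n0, hn0⟩ := hjump
      obtain ⟨N1, hN1⟩ := hev (ε/2) (by linarith)
      refine ⟨max n0 N1, fun n hn => ?_⟩
      obtain ⟨pl, qr, _, _, _, _, _, _, htM, hlow, hup⟩ := key n t ht
      obtain ⟨hplt, hqrt⟩ := htM (hMmono n0 n (le_trans (le_max_left _ _) hn) hn0)
      rw [hplt] at hlow hup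
      rw [hqrt] at hup
      have hup' := hup 0 (le_refl _) (fun u hu1 hu2 => by
        have hut : u = t := le_antisymm hu2 hu1
        rw [hut]
        simp)
      have hsm := hN1 n (le_trans (le_max_right _ _) hn)
      rw [Real.dist_eq, ← habeq t ht, abs_sub_lt_iff]
      constructor <;> linarith
    · push_neg at hjump
      have htSS : t ∉ SS := by
        intro hts
        rw [hsrange] at hts
        obtain ⟨k, hk⟩ := hts
        exact hjump k (hk ▸ hsM k k (le_refl _))
      have htc : ContinuousAt ab t := by
        by_contra hc
        exact htSS (Or.inl hc)
      rw [Metric.continuousAt_iff] at htc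
      obtain ⟨δab, hδab0, hδab⟩ := htc (ε/4) (by linarith)
      obtain ⟨N1, hN1⟩ := hev (min δx (min δab (ε/4))) (by positivity)
      refine ⟨N1, fun n hn => ?_⟩
      obtain ⟨pl, qr, hplM, hqrM, hplt, htqr, hplc, hqrc, _, hlow, hup⟩ := key n t ht
      have hsm := hN1 n hn
      have hsmδx : ((1:ℝ)/2)^n < δx := lt_of_lt_of_le hsm (min_le_left _ _)
      have hsmδab : ((1:ℝ)/2)^n < δab :=
        lt_of_lt_of_le hsm (le_trans (min_le_right _ _) (min_le_left _ _))
      have hsmε : ((1:ℝ)/2)^n < ε/4 :=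
        lt_of_lt_of_le hsm (le_trans (min_le_right _ _) (min_le_right _ _))
      have hpl01 := hM01 n pl hplM
      have hqr01 := hM01 n qr hqrM
      have habp : |ab pl - ab t| < ε/4 := by
        have := hδab (x := pl) (by rw [Real.dist_eq, abs_sub_lt_iff]; constructor <;> linarith)
        rwa [Real.dist_eq] at this
      have habq : |ab qr - ab t| < ε/4 := by
        have := hδab (x := qr) (by rw [Real.dist_eq, abs_sub_lt_iff]; constructor <;> linarith)
        rwa [Real.dist_eq] at this
      have hup' := hup (ε/4) (by linarith) (fun u hu1 hu2 => by
        refine hδx t ht u ⟨le_trans hpl01.1 hu1, le_trans hu2 ht.2⟩ ?_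
        rw [abs_sub_comm, abs_sub_le_iff]
        constructor <;> linarith)
      rw [Real.dist_eq, ← habeq t ht, abs_sub_lt_iff]
      rw [abs_sub_lt_iff] at habp habq
      constructor <;> linarith
  · -- uniform convergence
    intro hacont
    have habc : Continuous ab := hacont.comp_continuous hclampcont hclampmem
    have habu : UniformContinuousOn ab (Set.Icc 0 1) :=
      isCompact_Icc.uniformContinuousOn_of_continuous habc.continuousOn
    rw [Metric.uniformContinuousOn_iff] at habu
    rw [Metric.tendstoUniformlyOn_iff]
    intro ε hε
    obtain ⟨δx, hδx0, hδx⟩ := hosc (ε/8) (by linarith)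
    obtain ⟨δab, hδab0, hδab⟩ := habu (ε/8) (by linarith)
    obtain ⟨N1, hN1⟩ := hev (min δx (min (δab/2) (ε/8))) (by positivity)
    rw [Filter.eventually_atTop]
    refine ⟨N1, fun n hn t ht => ?_⟩
    obtain ⟨pl, qr, hplM, hqrM, hplt, htqr, hplc, hqrc, _, hlow, hup⟩ := key n t ht
    have hsm := hN1 n hn
    have hsmδx : ((1:ℝ)/2)^n < δx := lt_of_lt_of_le hsm (min_le_left _ _)
    have hsmδab : ((1:ℝ)/2)^n < δab/2 :=
      lt_of_lt_of_le hsm (le_trans (min_le_right _ _) (min_le_left _ _))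
    have hsmε : ((1:ℝ)/2)^n < ε/8 :=
      lt_of_lt_of_le hsm (le_trans (min_le_right _ _) (min_le_right _ _))
    have hpl01 := hM01 n pl hplM
    have hqr01 := hM01 n qr hqrM
    have habpq : |ab pl - ab qr| < ε/8 := by
      have := hδab pl (Set.mem_Icc.2 hpl01) qr (Set.mem_Icc.2 hqr01)
        (by rw [Real.dist_eq, abs_sub_lt_iff]; constructor <;> linarith)
      rwa [Real.dist_eq] at this
    have hup' := hup (ε/8) (by linarith) (fun u hu1 hu2 => by
      refine hδx t ht u ⟨le_trans hpl01.1 hu1, le_trans hu2 ht.2⟩ ?_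
      rw [abs_sub_comm, abs_sub_le_iff]
      constructor <;> linarith)
    have hmono1 : ab pl ≤ ab t := habm hplt
    have hmono2 : ab t ≤ ab qr := habm htqr
    rw [Real.dist_eq, ← habeq t ht, abs_sub_lt_iff]
    rw [abs_sub_lt_iff] at habpq
    constructor <;> linarith
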